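/- There exists an evidential structure (X, ≼), a set A of two alternatives, and a plan ζ : X → A that is SCEU-rational (rationalized by a subjective-conditional-expected-utility-representable conditional preference relation) but not ISD consistent. Specifically, take X = {∅, x₁, x₂, x₃, z₁, ..., z₅} with ⋖ comprising (z_i, x_i), (z₄, x_i), (z₅, x_i) for i = 1,2,3 and (x_i, ∅), ≼ its reflexive-transitive closure, A = {a, b}, ζ(∅) = ζ(z₁) = ζ(z₂) = ζ(z₃) = a and ζ(x₁) = ζ(x₂) = ζ(x₃) = ζ(z₄) = ζ(z₅) = b. -/

import Mathlib

namespace Evid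

variable {X : Type*}

/-- `x` is strictly more specific than `y`. -/
def Strict (le : X → X → Prop) (x y : X) : Prop := le x y ∧ ¬ le y x

/-- `x` is immediately more specific than `y`. -/
def Imm (le : X → X → Prop) (x y : X) : Prop :=
  Strict le x y ∧ ¬ ∃ w, Strict le x w ∧ Strict le w y

/-- `x` and `y` are incompatible: no common lower bound. -/
def Incompat (le : X → X → Prop) (x y : X) : Prop :=
  ¬ ∃ z, le z x ∧ le z y

/-- An evidential structure on carrier `X` with relation `le` and root `root`. -/
structure IsEvid (le : X → X → Prop) (root : X) : Prop where
  refl : ∀ x, le x x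
  trans : ∀ x y z, le x y → le y z → le x z
  wf : ¬ ∃ f : ℕ → X, ∀ k, Strict le (f (k+1)) (f k)
  root_top : ∀ x, x ≠ root → Strict le x root
  nontriv : ∃ x, x ≠ root
  interp : ∀ x z, Strict le x z → ∃ y, Imm le x y ∧ le y z
  finBranch : ∀ x, {w | Imm le w x}.Finite
  incompat_wit : ∀ x z, ¬ le x z → ∃ y, le y x ∧ Incompat le y z

/-- There is a chain of `n` immediate-specificity steps from `x` up to the root. -/
def ChainSpec (le : X → X → Prop) (root x : X) (n : ℕ) : Prop :=
  (x = root ∧ n = 0) ∨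
  ∃ g : ℕ → X, g 0 = x ∧ g n = root ∧ ∀ k < n, Imm le (g k) (g (k+1))

/-- `ρ` is the rank function: `ρ x` is the minimal chain length from `x` to the root. -/
def IsRank (le : X → X → Prop) (root : X) (ρ : X → ℕ) : Prop :=
  ∀ x, ChainSpec le root x (ρ x) ∧ ∀ n, ChainSpec le root x n → ρ x ≤ n

/-- An experimentation tree `(T, leT)` inside the evidential structure `(X, le)`. -/
structure IsTreeIn (le : X → X → Prop) (root : X) (T : Set X) (leT : X → X → Prop) : Prop where
  root_mem : root ∈ T
  nontriv : T ≠ {root}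
  sub : ∀ x y, leT x y → le x y ∧ x ∈ T ∧ y ∈ T
  refl : ∀ x ∈ T, leT x x
  trans : ∀ x y z, leT x y → leT y z → leT x z
  unique_succ : ∀ x ∈ T, x ≠ root → ∃! y, Imm leT x y
  imm_imm : ∀ x y, Imm leT x y → Imm le x y
  fork : ∀ x ∈ T, (∃ w, Strict leT w x) → ∃ y z, Imm leT y x ∧ Imm leT z x ∧ y ≠ z
  pred_incompat : ∀ x y z, Imm leT y x → Imm leT z x → y ≠ z → Incompat le y z
  unbiased : ∀ z x, x ∈ T → Strict le z x → (∃ w, Strict leT w x) →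
    ∃ v w, le v z ∧ le v w ∧ Imm leT w x

/-- `x` is maximally specific. -/
def MaxSpec (le : X → X → Prop) (x : X) : Prop := ¬ ∃ w, Strict le w x

/-- An evidential structure that is itself an experimentation tree. -/
def IsExpTree (le : X → X → Prop) (root : X) : Prop :=
  IsEvid le root ∧
  (∀ x, x ≠ root → ∃! y, Imm le x y) ∧
  (∀ x, ¬ MaxSpec le x → ∃ y z, Imm le y x ∧ Imm le z x ∧ y ≠ z) ∧
  (∀ x y z, Imm le y x → Imm le z x → y ≠ z → Incompat le y z)

/-- A plan on domain `Z` is ISD consistent. -/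
def ISDPlan {X A : Type*} (le : X → X → Prop) (Z : Set X) (ζ : X → A) : Prop :=
  ∀ (a : A) (z : X), z ∈ Z → {x | Imm le x z}.Nonempty →
    (∀ x, Imm le x z → x ∈ Z ∧ ζ x = a) → ζ z = a

/-- `R` is a conditional preference relation: each `R x` is a total preorder on `A`. -/
def CondPref {X A : Type*} (R : X → A → A → Prop) : Prop :=
  ∀ x, (∀ a b, R x a b ∨ R x b a) ∧ (∀ a b c, R x a b → R x b c → R x a c)

/-- Strict part of the conditional preference at `x`. -/
def PStrict {X A : Type*} (R : X → A → A → Prop) (x : X) (a b : A) : Prop :=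
  R x a b ∧ ¬ R x b a

/-- ISD consistency of a conditional preference relation. -/
def ISDPref {X A : Type*} (le : X → X → Prop) (R : X → A → A → Prop) : Prop :=
  ∀ z a b, {x | Imm le x z}.Nonempty →
    (∀ x, Imm le x z → PStrict R x a b) → PStrict R z a b

/-- `R` rationalizes the plan `ζ` on `Z`. -/
def Rationalizes {X A : Type*} (R : X → A → A → Prop) (Z : Set X) (ζ : X → A) : Prop :=
  ∀ x ∈ Z, ∀ a, a ≠ ζ x → PStrict R x a (ζ x)

/-- The plan `ζ` (on all of `X`) is SCEU-rational with respect to `(X, le)`. -/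
def SCEURational {X A : Type*} (le : X → X → Prop) (root : X) (ζ : X → A) : Prop :=
  ∃ (Φ : Type) (m : MeasurableSpace Φ) (c : X → Set Φ)
    (Pr : @MeasureTheory.Measure Φ m) (f : A → Φ → ℝ),
    MeasureTheory.IsProbabilityMeasure Pr ∧
    (∀ x, @MeasurableSet Φ m (c x) ∧ (c x).Nonempty) ∧
    c root = Set.univ ∧
    (∀ x y, le x y ↔ c x ⊆ c y) ∧
    (∀ x y, Incompat le x y → c x ∩ c y = ∅) ∧
    (∀ z, {x | Imm le x z}.Nonempty → c z = ⋃ x ∈ {x | Imm le x z}, c x) ∧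
    (∀ a, @Measurable Φ ℝ m _ (f a) ∧ ∃ M, ∀ φ, |f a φ| ≤ M) ∧
    ∀ (x : X) (a : A), a ≠ ζ x →
      (∫ φ in c x, f a φ ∂Pr) < ∫ φ in c x, f (ζ x) φ ∂Pr


open MeasureTheory in
private noncomputable def Pr5 : Measure (Fin 5) := (PMF.uniformOfFintype (Fin 5)).toMeasure

instance : MeasureTheory.IsProbabilityMeasure Pr5 := by unfold Pr5; infer_instance

open MeasureTheory in
private lemma integ5 (s : Finset (Fin 5)) (f : Fin 5 → ℝ) :
    (∫ φ in (↑s : Set (Fin 5)), f φ ∂Pr5) = (∑ φ : Fin 5, if φ ∈ s then f φ else 0) / 5 := by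
  rw [← integral_indicator s.measurableSet,
    integral_fintype (Integrable.of_finite)]
  have h : ∀ φ : Fin 5, Pr5 {φ} = (5 : ENNReal)⁻¹ := by
    intro φ
    rw [Pr5, PMF.toMeasure_apply_singleton _ _ (measurableSet_singleton φ),
      PMF.uniformOfFintype_apply]
    norm_num
  simp only [Measure.real, h, Set.indicator, Finset.mem_coe, smul_eq_mul, ENNReal.toReal_inv]
  rw [← Finset.mul_sum]
  simp [ENNReal.toReal_ofNat]
  ring

private def c9 : Fin 9 → Finset (Fin 5)
  | 0 => Finset.univ
  | 1 => {0,3,4}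
  | 2 => {1,3,4}
  | 3 => {2,3,4}
  | 4 => {0}
  | 5 => {1}
  | 6 => {2}
  | 7 => {3}
  | 8 => {4}

private def le9 (x y : Fin 9) : Prop := c9 x ⊆ c9 y

instance : DecidableRel le9 := fun x y => by unfold le9; infer_instance
instance (x y : Fin 9) : Decidable (Strict le9 x y) := by unfold Strict; infer_instance
instance (x y : Fin 9) : Decidable (Imm le9 x y) := by unfold Imm; infer_instance
instance (x y : Fin 9) : Decidable (Incompat le9 x y) := by unfold Incompat; infer_instance

private def zeta9 (x : Fin 9) : Bool := decide (x.val = 0 ∨ (4 ≤ x.val ∧ x.val ≤ 6))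

private def fA : Bool → Fin 5 → ℝ := fun a φ => if a = decide (φ.val < 3) then 1 else 0

private lemma no_descend {Y : Type*} [Finite Y] (le : Y → Y → Prop)
    (hrefl : ∀ x, le x x) (htrans : ∀ x y z, le x y → le y z → le x z) :
    ¬ ∃ f : ℕ → Y, ∀ k, Strict le (f (k+1)) (f k) := by
  rintro ⟨f, hf⟩
  have key : ∀ j k, j < k → Strict le (f k) (f j) := by
    intro j k hjk
    induction k with
    | zero => omega
    | succ n ih =>
      rcases Nat.lt_succ_iff_lt_or_eq.mp hjk with h | h
      · have h1 := ih h
        exact ⟨htrans _ _ _ (hf n).1 h1.1, fun hle => h1.2 (htrans _ _ _ hle (hf n).1)⟩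
      · subst h; exact hf j
  obtain ⟨i, j, hne, heq⟩ := Finite.exists_ne_map_eq_of_infinite f
  rcases hne.lt_or_gt with h | h
  · exact (key i j h).2 (heq ▸ hrefl (f i))
  · exact (key j i h).2 (heq ▸ hrefl (f i))

theorem stmt17 :
    ∃ (X : Type) (le : X → X → Prop) (root : X) (A : Type) (inst : Fintype A)
      (ζ : X → A),
      IsEvid le root ∧ @Fintype.card A inst = 2 ∧
      SCEURational le root ζ ∧ ¬ ISDPlan le Set.univ ζ := by
  refine ⟨Fin 9, le9, 0, Bool, inferInstance, zeta9, ?_, rfl, ?_, ?_⟩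
  · refine ⟨fun x => subset_rfl, fun x y z h1 h2 => h1.trans h2,
      no_descend le9 (fun x => subset_rfl) (fun x y z h1 h2 => h1.trans h2),
      by decide, ⟨1, by decide⟩, by decide, fun x => Set.toFinite _, by decide⟩
  · refine ⟨Fin 5, inferInstance, fun x => ↑(c9 x), Pr5, fA, inferInstance,
      ?_, ?_, ?_, ?_, ?_, ?_, ?_⟩
    · intro x
      refine ⟨(c9 x).measurableSet, ?_⟩
      have : (c9 x).Nonempty := by revert x; decide
      exact_mod_cast this
    · simp [c9]
    · intro x y
      rw [show le9 x y ↔ c9 x ⊆ c9 y from Iff.rfl, Finset.coe_subset]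
    · intro x y h
      have h2 : c9 x ∩ c9 y = ∅ := by revert h; revert x y; decide
      rw [← Finset.coe_inter, h2]; simp
    · intro z hz
      have hz' : ∃ x, Imm le9 x z := hz
      have key : ∀ (z : Fin 9) (φ : Fin 5), (∃ x, Imm le9 x z) →
          (φ ∈ c9 z ↔ ∃ x, Imm le9 x z ∧ φ ∈ c9 x) := by decide
      ext φ
      simpa [Set.mem_iUnion] using key z φ hz'
    · intro a
      refine ⟨measurable_of_countable _, 1, fun φ => ?_⟩
      unfold fA; split <;> norm_num
    · intro x a h
      fin_cases x <;> revert h <;> fin_cases a <;> intro h <;>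
        simp only [zeta9, ne_eq, decide_eq_true_eq] at h <;>
        first
        | (exact absurd (by decide) h)
        | (rw [show zeta9 _ = (decide _) from rfl];
           rw [integ5, integ5, Fin.sum_univ_five, Fin.sum_univ_five];
           norm_num [fA, c9, Fin.ext_iff, show ((3:Fin 5):ℕ) = 3 by rfl,
             show ((4:Fin 5):ℕ) = 4 by rfl])
  · intro h
    have h1 := h false 0 trivial ⟨1, by decide⟩
      (fun x hx => ⟨trivial, by revert hx; revert x; decide⟩)
    have h2 : zeta9 0 = true := by decide
    rw [h1] at h2
    exact Bool.false_ne_true h2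

end Evid
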